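/- For real p and real q > 0, ∫₀^∞ (1 − cos(p x))/(x · sinh(q x)) dx = ln cosh(p π/(2q)). -/

import Mathlib

open Real MeasureTheory Set Filter

lemma integrable_exp_mul_bounded (a : ℝ) (ha : 0 < a) (g : ℝ → ℝ) (hg : Continuous g)
    (hgb : ∀ x, |g x| ≤ 1) :
    IntegrableOn (fun x => Real.exp (-a*x) * g x) (Ioi (0:ℝ)) := by
  apply Integrable.mono' (exp_neg_integrableOn_Ioi 0 ha)
  · exact ((Real.continuous_exp.comp (continuous_const.mul continuous_id)).mul hg).aestronglyMeasurable
  · filter_upwards with x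
    rw [norm_mul, Real.norm_eq_abs, Real.abs_exp, Real.norm_eq_abs]
    nlinarith [hgb x, abs_nonneg (g x), Real.exp_pos (-a*x)]

lemma tendsto_exp_neg_mul (a : ℝ) (ha : 0 < a) :
    Tendsto (fun x => Real.exp (-a*x)) atTop (nhds 0) := by
  apply Real.tendsto_exp_comp_nhds_zero.mpr
  have : Tendsto (fun x : ℝ => a*x) atTop atTop := tendsto_id.const_mul_atTop ha
  exact (tendsto_neg_atBot_iff.mpr this).congr (fun x => by ring)

lemma laplace_sin (a t : ℝ) (ha : 0 < a) :
    ∫ x in Ioi (0:ℝ), Real.exp (-a*x) * Real.sin (t*x) = t / (a^2 + t^2) := by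
  have hD : (0:ℝ) < a^2 + t^2 := by positivity
  set F : ℝ → ℝ := fun x => -Real.exp (-a*x) * (a * Real.sin (t*x) + t * Real.cos (t*x)) / (a^2+t^2) with hF
  have hderiv : ∀ x ∈ Ioi (0:ℝ), HasDerivAt F (Real.exp (-a*x) * Real.sin (t*x)) x := by
    intro x _
    have h1 : HasDerivAt (fun x => Real.exp (-a*x)) (-a * Real.exp (-a*x)) x := by
      simpa [mul_comm] using (HasDerivAt.exp ((hasDerivAt_id x).const_mul (-a)))
    have h2 : HasDerivAt (fun x => Real.sin (t*x)) (t * Real.cos (t*x)) x := by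
      simpa [mul_comm] using (HasDerivAt.sin ((hasDerivAt_id x).const_mul t))
    have h3 : HasDerivAt (fun x => Real.cos (t*x)) (-(t * Real.sin (t*x))) x := by
      simpa [mul_comm] using (HasDerivAt.cos ((hasDerivAt_id x).const_mul t))
    have := (((h1.neg.mul ((h2.const_mul a).add (h3.const_mul t)))).div_const (a^2+t^2))
    refine this.congr_deriv ?_
    simp only [Pi.add_apply, Pi.neg_apply]
    field_simp
    ring
  have hcont : ContinuousWithinAt F (Ici 0) 0 := by
    apply Continuous.continuousWithinAt; fun_prop
  have hint : IntegrableOn (fun x => Real.exp (-a*x) * Real.sin (t*x)) (Ioi (0:ℝ)) := by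
    exact integrable_exp_mul_bounded a ha _ (by fun_prop) (fun x => abs_sin_le_one (t*x))
  have htend : Tendsto F atTop (nhds 0) := by
    apply squeeze_zero_norm (a := fun x => ((|a|+|t|)/(a^2+t^2)) * Real.exp (-a*x)) (f := F)
    · intro x
      rw [hF]
      rw [Real.norm_eq_abs, abs_div, abs_of_pos hD, div_mul_eq_mul_div, div_le_div_iff_of_pos_right hD,
        abs_mul, abs_neg, Real.abs_exp, mul_comm (Real.exp _)]
      apply mul_le_mul_of_nonneg_right _ (Real.exp_pos _).le
      calc |a * Real.sin (t*x) + t * Real.cos (t*x)| ≤ |a * Real.sin (t*x)| + |t * Real.cos (t*x)| := abs_add_le _ _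
        _ ≤ |a| + |t| := by
            rw [abs_mul, abs_mul]
            have := abs_sin_le_one (t*x); have := abs_cos_le_one (t*x)
            nlinarith [abs_nonneg a, abs_nonneg t]
    · simpa using (tendsto_exp_neg_mul a ha).const_mul ((|a|+|t|)/(a^2+t^2))
  have := integral_Ioi_of_hasDerivAt_of_tendsto hcont hderiv hint htend
  rw [this]
  simp [hF, neg_div]

lemma sin_int (x p : ℝ) (hx : 0 < x) :
    ∫ t in (0:ℝ)..p, Real.sin (t*x) = (1 - Real.cos (p*x)) / x := by
  have hderiv : ∀ t ∈ uIcc (0:ℝ) p, HasDerivAt (fun t => -Real.cos (t*x) / x) (Real.sin (t*x)) t := by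
    intro t _
    have h3 : HasDerivAt (fun t => Real.cos (t*x)) (-(x * Real.sin (t*x))) t := by
      simpa [mul_comm] using (HasDerivAt.cos ((hasDerivAt_id t).const_mul x))
    have := (h3.neg).div_const x
    refine this.congr_deriv ?_
    field_simp
  rw [intervalIntegral.integral_eq_sub_of_hasDerivAt hderiv (by apply Continuous.intervalIntegrable; fun_prop)]
  field_simp
  rw [mul_zero, Real.cos_zero]; ring

lemma frullani (a p : ℝ) (ha : 0 < a) (hp : 0 < p) :
    IntegrableOn (fun x => (1 - Real.cos (p*x)) * Real.exp (-a*x) / x) (Ioi 0) ∧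
    ∫ x in Ioi (0:ℝ), (1 - Real.cos (p*x)) * Real.exp (-a*x) / x
      = (Real.log (a^2+p^2) - Real.log (a^2))/2 := by
  set μ := volume.restrict (Ioc (0:ℝ) p) with hμ
  set ν := volume.restrict (Ioi (0:ℝ)) with hν
  set f : ℝ → ℝ → ℝ := fun t x => Real.exp (-a*x) * Real.sin (t*x) with hf
  have hint : Integrable (Function.uncurry f) (μ.prod ν) := by
    apply Integrable.mono' (g := fun z : ℝ×ℝ => (1:ℝ) * Real.exp (-a*z.2))
    · exact Integrable.mul_prod (integrable_const (μ := μ) 1) (exp_neg_integrableOn_Ioi 0 ha)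
    · apply Continuous.aestronglyMeasurable
      have : Function.uncurry f = fun z : ℝ×ℝ => Real.exp (-a*z.2) * Real.sin (z.1*z.2) := rfl
      rw [this]; fun_prop
    · filter_upwards with z
      simp only [Function.uncurry, hf, one_mul, norm_mul, Real.norm_eq_abs, Real.abs_exp]
      nlinarith [abs_sin_le_one (z.1*z.2), abs_nonneg (Real.sin (z.1*z.2)), Real.exp_pos (-a*z.2)]
  have swap := integral_integral_swap hint
  -- LHS of swap
  have hL : (∫ t, ∫ x, f t x ∂ν ∂μ) = (Real.log (a^2+p^2) - Real.log (a^2))/2 := by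
    have h1 : (fun t => ∫ x, f t x ∂ν) = fun t => t/(a^2+t^2) :=
      funext fun t => laplace_sin a t ha
    rw [h1, hμ, ← intervalIntegral.integral_of_le hp.le]
    have hderiv : ∀ t ∈ uIcc (0:ℝ) p, HasDerivAt (fun t => Real.log (a^2+t^2) / 2) (t/(a^2+t^2)) t := by
      intro t _
      have hD : (0:ℝ) < a^2 + t^2 := by positivity
      have h2 : HasDerivAt (fun t : ℝ => a^2 + t^2) (2*t) t := by
        simpa using (hasDerivAt_pow 2 t).const_add (a^2)
      have := ((Real.hasDerivAt_log hD.ne').comp t h2).div_const 2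
      refine this.congr_deriv ?_
      field_simp
    have hci : IntervalIntegrable (fun t => t/(a^2+t^2)) volume 0 p := by
      apply Continuous.intervalIntegrable
      apply Continuous.div continuous_id (by fun_prop)
      intro t; positivity
    rw [intervalIntegral.integral_eq_sub_of_hasDerivAt hderiv hci]
    simp
    ring
  -- RHS of swap: inner integral equals target on Ioi 0
  have hR : ∀ x ∈ Ioi (0:ℝ), (∫ t, f t x ∂μ) = (1 - Real.cos (p*x)) * Real.exp (-a*x) / x := by
    intro x hx
    rw [hμ, ← intervalIntegral.integral_of_le hp.le]
    have : (∫ t in (0:ℝ)..p, f t x) = Real.exp (-a*x) * ∫ t in (0:ℝ)..p, Real.sin (t*x) := by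
      rw [← intervalIntegral.integral_const_mul]
    rw [this, sin_int x p hx]
    ring
  constructor
  · have := hint.integral_prod_right
    apply this.congr
    rw [hν, Filter.EventuallyEq, ae_restrict_iff' measurableSet_Ioi]
    filter_upwards with x hx
    exact hR x hx
  · have : (∫ x, ∫ t, f t x ∂μ ∂ν) = ∫ x in Ioi (0:ℝ), (1 - Real.cos (p*x)) * Real.exp (-a*x) / x := by
      rw [hν]
      exact setIntegral_congr_fun measurableSet_Ioi hR
    rw [← this, ← swap, hL]


lemma summable_log_terms (t : ℝ) :
    Summable (fun k : ℕ => Real.log (1 + 4*t^2/(2*(k:ℝ)+1)^2)) := by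
  have hbase : Summable (fun k : ℕ => 4*t^2 * (1/((k:ℝ)+1)^2)) := by
    apply Summable.mul_left
    have := (Real.summable_one_div_nat_pow (p := 2)).mpr one_lt_two
    exact (summable_nat_add_iff 1).mpr this |>.congr (fun k => by push_cast; ring)
  apply Summable.of_nonneg_of_le _ _ hbase
  · intro k
    apply Real.log_nonneg
    have : (0:ℝ) ≤ 4*t^2/(2*(k:ℝ)+1)^2 := by positivity
    linarith
  · intro k
    have hk : (0:ℝ) < 2*(k:ℝ)+1 := by positivity
    have h1 : Real.log (1 + 4*t^2/(2*(k:ℝ)+1)^2) ≤ 4*t^2/(2*(k:ℝ)+1)^2 := by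
      have := Real.log_le_sub_one_of_pos (x := 1 + 4*t^2/(2*(k:ℝ)+1)^2) (by positivity)
      linarith
    refine h1.trans ?_
    rw [mul_one_div]
    gcongr
    nlinarith [Nat.cast_nonneg (α:=ℝ) k]

lemma prod_split (u : ℝ) (n : ℕ) :
    ∏ j ∈ Finset.range (2*n), (1 + 4*u/((j:ℝ)+1)^2) =
    (∏ j ∈ Finset.range n, (1 + u/((j:ℝ)+1)^2)) *
      ∏ m ∈ Finset.range n, (1 + 4*u/(2*(m:ℝ)+1)^2) := by
  induction n with
  | zero => simp
  | succ n ih =>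
    have h2 : 2*(n+1) = (2*n+1)+1 := by ring
    rw [h2, Finset.prod_range_succ, Finset.prod_range_succ, ih,
      Finset.prod_range_succ, Finset.prod_range_succ]
    have key : (1 + 4*u/(((2*n+1 : ℕ):ℝ)+1)^2) = 1 + u/(((n:ℕ):ℝ)+1)^2 := by
      have hne : ((n:ℝ)+1) ≠ 0 := by positivity
      push_cast
      rw [show (2*(n:ℝ)+1)+1 = 2*((n:ℝ)+1) by ring]
      field_simp
      try ring
    rw [key]
    push_cast
    ring

lemma tendsto_cosh_prod (t : ℝ) :
    Tendsto (fun n => ∏ m ∈ Finset.range n, (1 + 4*t^2/(2*(m:ℝ)+1)^2)) atTop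
      (nhds (Real.cosh (π*t))) := by
  rcases eq_or_ne t 0 with rfl | ht
  · simpa using tendsto_const_nhds
  set A : ℕ → ℝ := fun n => ∏ j ∈ Finset.range n, (1 + t^2/((j:ℝ)+1)^2) with hA
  set B : ℕ → ℝ := fun n => ∏ j ∈ Finset.range n, (1 + 4*t^2/((j:ℝ)+1)^2) with hB
  have hApos : ∀ n, 0 < A n := fun n => Finset.prod_pos (fun j _ => by positivity)
  -- complex product identity
  have hprodA : ∀ n : ℕ, (∏ j ∈ Finset.range n, (1 - ((t:ℂ)*Complex.I)^2/((j:ℕ)+1)^2)) = ((A n : ℝ) : ℂ) := by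
    intro n
    rw [hA]
    push_cast
    apply Finset.prod_congr rfl
    intro j _
    have : ((t:ℂ)*Complex.I)^2 = -(t:ℂ)^2 := by
      rw [mul_pow, Complex.I_sq]; ring
    rw [this]; ring
  have hprodB : ∀ n : ℕ, (∏ j ∈ Finset.range n, (1 - ((2*t:ℂ)*Complex.I)^2/((j:ℕ)+1)^2)) = ((B n : ℝ) : ℂ) := by
    intro n
    rw [hB]
    push_cast
    apply Finset.prod_congr rfl
    intro j _
    have : ((2*(t:ℂ))*Complex.I)^2 = -(4*(t:ℂ)^2) := by
      rw [mul_pow, Complex.I_sq]; ring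
    rw [this]; ring
  have hsinA : Complex.sin (↑π * ((t:ℂ)*Complex.I)) = (Real.sinh (π*t) : ℝ) * Complex.I := by
    rw [show (↑π * ((t:ℂ)*Complex.I)) = ((π*t : ℝ) : ℂ) * Complex.I by push_cast; ring,
      Complex.sin_mul_I, Complex.ofReal_sinh]
    try (push_cast; ring)
  have hA' : Tendsto (fun n => π*t*A n) atTop (nhds (Real.sinh (π*t))) := by
    have h := Complex.tendsto_euler_sin_prod ((t:ℂ)*Complex.I)
    have h2 := (Complex.continuous_im.tendsto _).comp h
    simp only [Function.comp_def] at h2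
    have h3 : (fun n => (↑π * ((t:ℂ)*Complex.I) * ∏ j ∈ Finset.range n, (1 - ((t:ℂ)*Complex.I)^2/((j:ℕ)+1)^2)).im)
        = fun n => π*t*A n := by
      funext n
      rw [hprodA n, show (↑π * ((t:ℂ)*Complex.I) * ((A n : ℝ):ℂ)) = ((π*t*A n : ℝ):ℂ) * Complex.I by push_cast; ring,
        Complex.mul_im, Complex.ofReal_re, Complex.ofReal_im, Complex.I_im, Complex.I_re]
      ring
    rw [h3, hsinA] at h2
    rwa [show ((Real.sinh (π*t) : ℂ) * Complex.I).im = Real.sinh (π*t) by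
      rw [Complex.mul_im, Complex.ofReal_re, Complex.ofReal_im, Complex.I_im, Complex.I_re]; ring] at h2
  have hB' : Tendsto (fun n => 2*(π*t)*B n) atTop (nhds (Real.sinh (2*(π*t)))) := by
    have h := Complex.tendsto_euler_sin_prod ((2*t:ℂ)*Complex.I)
    have h2 := (Complex.continuous_im.tendsto _).comp h
    simp only [Function.comp_def] at h2
    have hsinB : Complex.sin (↑π * ((2*t:ℂ)*Complex.I)) = (Real.sinh (2*(π*t)) : ℝ) * Complex.I := by
      rw [show (↑π * ((2*t:ℂ)*Complex.I)) = ((2*(π*t) : ℝ) : ℂ) * Complex.I by push_cast; ring,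
        Complex.sin_mul_I, Complex.ofReal_sinh]
    have h3 : (fun n => (↑π * ((2*t:ℂ)*Complex.I) * ∏ j ∈ Finset.range n, (1 - ((2*t:ℂ)*Complex.I)^2/((j:ℕ)+1)^2)).im)
        = fun n => 2*(π*t)*B n := by
      funext n
      rw [hprodB n, show (↑π * ((2*t:ℂ)*Complex.I) * ((B n : ℝ):ℂ)) = ((2*(π*t)*B n : ℝ):ℂ) * Complex.I by push_cast; ring,
        Complex.mul_im, Complex.ofReal_re, Complex.ofReal_im, Complex.I_im, Complex.I_re]
      ring
    rw [h3, hsinB] at h2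
    rwa [show ((Real.sinh (2*(π*t)) : ℂ) * Complex.I).im = Real.sinh (2*(π*t)) by
      rw [Complex.mul_im, Complex.ofReal_re, Complex.ofReal_im, Complex.I_im, Complex.I_re]; ring] at h2
  have h2n : Tendsto (fun n : ℕ => 2*n) atTop atTop := by
    apply tendsto_atTop_atTop_of_monotone (fun a b h => by omega)
    intro b; exact ⟨b, by omega⟩
  have hB2 : Tendsto (fun n : ℕ => 2*(π*t)*B (2*n)) atTop (nhds (Real.sinh (2*(π*t)))) :=
    hB'.comp h2n
  have hsinhne : Real.sinh (π*t) ≠ 0 := by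
    rw [Real.sinh_ne_zero]
    exact mul_ne_zero Real.pi_ne_zero ht
  have hdiv : Tendsto (fun n : ℕ => (2*(π*t)*B (2*n)) / (2*(π*t*A n))) atTop
      (nhds (Real.sinh (2*(π*t)) / (2*Real.sinh (π*t)))) := by
    exact hB2.div (hA'.const_mul 2) (by simpa using hsinhne)
  have heq : ∀ n : ℕ, (2*(π*t)*B (2*n)) / (2*(π*t*A n)) =
      ∏ m ∈ Finset.range n, (1 + 4*t^2/(2*(m:ℝ)+1)^2) := by
    intro n
    have hsplit := prod_split (t^2) n
    simp only [hB, hA]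
    rw [hsplit]
    have hne : π*t ≠ 0 := mul_ne_zero Real.pi_ne_zero ht
    set Ap := ∏ j ∈ Finset.range n, (1 + t^2/((j:ℝ)+1)^2) with hAp
    set Q := ∏ m ∈ Finset.range n, (1 + 4*t^2/(2*(m:ℝ)+1)^2) with hQ
    have hAne : Ap ≠ 0 := (hApos n).ne'
    have hc : (2*(π*t*Ap)) ≠ 0 := by
      apply mul_ne_zero two_ne_zero (mul_ne_zero hne hAne)
    rw [show 2*(π*t)*(Ap*Q) = 2*(π*t*Ap)*Q by ring, mul_comm (2*(π*t*Ap)) Q,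
      mul_div_assoc, div_self hc, mul_one]
  have hlim : Real.sinh (2*(π*t)) / (2*Real.sinh (π*t)) = Real.cosh (π*t) := by
    rw [Real.sinh_two_mul]
    field_simp
    try ring
  rw [← hlim]
  exact hdiv.congr heq

lemma log_cosh_tsum (t : ℝ) :
    ∑' k : ℕ, Real.log (1 + 4*t^2/(2*(k:ℝ)+1)^2) = Real.log (Real.cosh (π*t)) := by
  have hs := summable_log_terms t
  have h1 := hs.hasSum.tendsto_sum_nat
  have h2 : Tendsto (fun n => Real.log (∏ m ∈ Finset.range n, (1 + 4*t^2/(2*(m:ℝ)+1)^2)))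
      atTop (nhds (Real.log (Real.cosh (π*t)))) :=
    ((Real.continuousAt_log (Real.cosh_pos (π*t)).ne').tendsto.comp (tendsto_cosh_prod t))
  have h3 : ∀ n, Real.log (∏ m ∈ Finset.range n, (1 + 4*t^2/(2*(m:ℝ)+1)^2)) =
      ∑ m ∈ Finset.range n, Real.log (1 + 4*t^2/(2*(m:ℝ)+1)^2) := by
    intro n
    apply Real.log_prod
    intro m _
    positivity
  rw [funext h3] at h2
  exact tendsto_nhds_unique h1 h2








lemma stmt_aux (p q : ℝ) (hq : 0 < q) (hp : 0 < p) :
    ∫ x in Set.Ioi (0:ℝ), (1 - Real.cos (p * x)) / (x * Real.sinh (q * x)) =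
      Real.log (Real.cosh (p * π / (2 * q))) := by
  set t : ℝ := p / (2*q) with ht
  set a : ℕ → ℝ := fun k => (2*(k:ℝ)+1)*q with ha
  have hapos : ∀ k, 0 < a k := fun k => by
    rw [ha]; positivity
  set F : ℕ → ℝ → ℝ := fun k x => 2 * ((1 - Real.cos (p*x)) * Real.exp (-(a k)*x) / x) with hF
  have hFint : ∀ k, Integrable (F k) (volume.restrict (Ioi 0)) := by
    intro k
    exact ((frullani (a k) p (hapos k) hp).1).const_mul 2
  have hFval : ∀ k, ∫ x in Ioi (0:ℝ), F k x = Real.log (1 + 4*t^2/(2*(k:ℝ)+1)^2) := by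
    intro k
    rw [hF]
    simp only []
    rw [MeasureTheory.integral_const_mul, (frullani (a k) p (hapos k) hp).2]
    have h1 : Real.log ((a k)^2+p^2) - Real.log ((a k)^2) = Real.log (((a k)^2+p^2)/(a k)^2) := by
      rw [Real.log_div (by positivity) (by positivity)]
    have h2 : ((a k)^2+p^2)/(a k)^2 = 1 + 4*t^2/(2*(k:ℝ)+1)^2 := by
      rw [ht, ha]
      have h3 : ((2*(k:ℝ)+1)*q) ≠ 0 := (hapos k).ne'
      have h4 : (2*(k:ℝ)+1) ≠ 0 := by positivity
      field_simp
      ring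
    rw [h1, h2]
    ring
  have hFnonneg : ∀ k, ∀ x ∈ Ioi (0:ℝ), 0 ≤ F k x := by
    intro k x hx
    rw [hF]
    have h1 : (0:ℝ) ≤ 1 - Real.cos (p*x) := by linarith [Real.cos_le_one (p*x)]
    have hx0 : (0:ℝ) < x := hx
    exact mul_nonneg (by norm_num)
      (div_nonneg (mul_nonneg h1 (Real.exp_nonneg _)) hx0.le)
  have hFnorm : ∀ k, (∫ x in Ioi (0:ℝ), ‖F k x‖) = ∫ x in Ioi (0:ℝ), F k x := by
    intro k
    apply setIntegral_congr_fun measurableSet_Ioi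
    intro x hx
    exact abs_of_nonneg (hFnonneg k x hx)
  have hsum : Summable (fun k => ∫ x in Ioi (0:ℝ), ‖F k x‖) := by
    apply Summable.congr (summable_log_terms t)
    intro k
    rw [hFnorm k, hFval k]
  have hswap := integral_tsum_of_summable_integral_norm hFint hsum
  have hpt : ∀ x ∈ Ioi (0:ℝ), (∑' k, F k x) = (1 - Real.cos (p * x)) / (x * Real.sinh (q * x)) := by
    intro x hx
    have hx0 : (0:ℝ) < x := hx
    have hr1 : Real.exp (-(2*q*x)) < 1 := by
      rw [Real.exp_lt_one_iff]
      nlinarith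
    have hterm : ∀ k : ℕ, F k x =
        (2 * (1 - Real.cos (p*x)) / x * Real.exp (-(q*x))) * Real.exp (-(2*q*x)) ^ k := by
      intro k
      rw [hF, ha]
      simp only []
      have hkey : Real.exp (-(q*x)) * Real.exp (-(2*q*x))^k = Real.exp (-((2*(k:ℝ)+1)*q)*x) := by
        rw [← Real.exp_nat_mul, ← Real.exp_add]
        congr 1
        push_cast
        ring
      rw [← hkey]
      ring
    rw [tsum_congr hterm, tsum_mul_left, tsum_geometric_of_lt_one (Real.exp_nonneg _) hr1]
    have hsh : 0 < Real.sinh (q*x) := Real.sinh_pos_iff.mpr (by positivity)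
    have hden : 1 - Real.exp (-(2*q*x)) = 2 * Real.exp (-(q*x)) * Real.sinh (q*x) := by
      rw [Real.sinh_eq]
      rw [show (-(2*q*x)) = -(q*x) + -(q*x) by ring, Real.exp_add]
      have he := Real.exp_ne_zero (-(q*x))
      field_simp [Real.exp_neg]
      rw [mul_sub, ← Real.exp_add, neg_add_cancel, Real.exp_zero, sq]
    rw [hden]
    have he : Real.exp (-(q*x)) ≠ 0 := Real.exp_ne_zero _
    field_simp
  calc ∫ x in Set.Ioi (0:ℝ), (1 - Real.cos (p * x)) / (x * Real.sinh (q * x))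
      = ∫ x in Set.Ioi (0:ℝ), (∑' k, F k x) :=
        (setIntegral_congr_fun measurableSet_Ioi (fun x hx => (hpt x hx).symm))
    _ = ∑' k, ∫ x in Set.Ioi (0:ℝ), F k x := hswap.symm
    _ = ∑' k : ℕ, Real.log (1 + 4*t^2/(2*(k:ℝ)+1)^2) := tsum_congr hFval
    _ = Real.log (Real.cosh (π * t)) := log_cosh_tsum t
    _ = Real.log (Real.cosh (p * π / (2 * q))) := by rw [ht, show π * (p/(2*q)) = p * π / (2*q) by ring]

theorem stmt_9 (p q : ℝ) (hq : 0 < q) :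
    ∫ x in Set.Ioi (0:ℝ), (1 - Real.cos (p * x)) / (x * Real.sinh (q * x)) =
      Real.log (Real.cosh (p * π / (2 * q))) := by
  rcases lt_trichotomy p 0 with hp | rfl | hp
  · have h := stmt_aux (-p) q hq (by linarith)
    have h1 : ∀ x : ℝ, (1 - Real.cos (-p * x)) = (1 - Real.cos (p * x)) := by
      intro x; rw [show (-p*x) = -(p*x) by ring, Real.cos_neg]
    have h2 : Real.cosh (-p * π / (2 * q)) = Real.cosh (p * π / (2 * q)) := by
      rw [show (-p * π / (2*q)) = -(p * π / (2*q)) by ring, Real.cosh_neg]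
    simp only [h1, h2] at h
    exact h
  · simp
  · exact stmt_aux p q hq hp
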